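/- Let f⁰ be L₂-smooth and suppose at iterate x_t we have ∇f⁰(x_t) ≠ 0 and ∇f¹(x_t) ≠ 0. Let C_t = ‖∇f¹(x_t)‖/‖∇f⁰(x_t)‖ and α_t be the angle between ∇f⁰(x_t) and ∇f¹(x_t) (so ⟨∇f⁰(x_t), ∇f¹(x_t)⟩ = cos(α_t)‖∇f⁰(x_t)‖‖∇f¹(x_t)‖). If x_{t+1} = x_t - η_t(∇f⁰(x_t) + ∇f¹(x_t)), then f⁰(x_{t+1}) ≤ f⁰(x_t) - η_t(1 + cos(α_t)C_t - (1 + C_t²)L₂η_t)‖∇f⁰(x_t)‖². -/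

import Mathlib

open RealInnerProductSpace

set_option maxHeartbeats 1000000 in
lemma descent_aux {m : ℕ} (f : EuclideanSpace ℝ (Fin m) → ℝ) {L : ℝ} (hL : 0 ≤ L)
    (hd : Differentiable ℝ f) (hlip : LipschitzWith ⟨L, hL⟩ (gradient f))
    (x y : EuclideanSpace ℝ (Fin m)) :
    f y ≤ f x + ⟪gradient f x, y - x⟫ + L / 2 * ‖y - x‖ ^ 2 := by
  set v := y - x with hv
  have hcontg : Continuous (gradient f) := hlip.continuous
  have key : ∀ s : ℝ, HasDerivAt (fun s : ℝ => f (x + s • v))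
      ⟪gradient f (x + s • v), v⟫ s := by
    intro s
    have h1 : HasFDerivAt f
        (InnerProductSpace.toDual ℝ _ (gradient f (x + s • v))) (x + s • v) :=
      (hd _).hasGradientAt.hasFDerivAt
    have h2 : HasDerivAt (fun s : ℝ => x + s • v) v s := by
      have : HasDerivAt (fun s : ℝ => s • v) v s := by
        simpa using (hasDerivAt_id s).smul_const v
      simpa using this.const_add x
    simpa [InnerProductSpace.toDual_apply_apply, Function.comp_def] using h1.comp_hasDerivAt s h2
  have hder_cont : Continuous fun s : ℝ => ⟪gradient f (x + s • v), v⟫ := by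
    exact (hcontg.comp (continuous_const.add (continuous_id.smul continuous_const))).inner continuous_const
  have hint : f (x + (1:ℝ) • v) - f (x + (0:ℝ) • v)
      = ∫ s in (0:ℝ)..1, ⟪gradient f (x + s • v), v⟫ := by
    rw [intervalIntegral.integral_eq_sub_of_hasDerivAt (fun s _ => key s)
      (hder_cont.intervalIntegrable 0 1)]
  have hbound : ∀ s ∈ Set.Icc (0:ℝ) 1,
      ⟪gradient f (x + s • v), v⟫ ≤ ⟪gradient f x, v⟫ + L * s * ‖v‖ ^ 2 := by
    intro s hs
    have h1 : ⟪gradient f (x + s • v) - gradient f x, v⟫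
        ≤ ‖gradient f (x + s • v) - gradient f x‖ * ‖v‖ :=
      real_inner_le_norm _ _
    have h2 : ‖gradient f (x + s • v) - gradient f x‖ ≤ L * (s * ‖v‖) := by
      have := hlip.dist_le_mul (x + s • v) x
      simp only [dist_eq_norm] at this
      calc ‖gradient f (x + s • v) - gradient f x‖ ≤ L * ‖x + s • v - x‖ := this
        _ = L * (|s| * ‖v‖) := by rw [add_sub_cancel_left, norm_smul]; simp
        _ = L * (s * ‖v‖) := by rw [abs_of_nonneg hs.1]
    have h3 : ‖gradient f (x + s • v) - gradient f x‖ * ‖v‖ ≤ L * s * ‖v‖ ^ 2 := by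
      calc ‖gradient f (x + s • v) - gradient f x‖ * ‖v‖
          ≤ L * (s * ‖v‖) * ‖v‖ := by
            exact mul_le_mul_of_nonneg_right h2 (norm_nonneg _)
        _ = L * s * ‖v‖ ^ 2 := by ring
    have := h1.trans h3
    rw [inner_sub_left] at this
    linarith
  have hint2 : (∫ s in (0:ℝ)..1, ⟪gradient f (x + s • v), v⟫)
      ≤ ∫ s in (0:ℝ)..1, (⟪gradient f x, v⟫ + L * s * ‖v‖ ^ 2) := by
    apply intervalIntegral.integral_mono_on (by norm_num)
      (hder_cont.intervalIntegrable 0 1)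
      ((Continuous.intervalIntegrable (by fun_prop) 0 1 :
        IntervalIntegrable (fun s : ℝ => ⟪gradient f x, v⟫ + L * s * ‖v‖ ^ 2)
          MeasureTheory.volume 0 1))
    exact hbound
  have hval : (∫ s in (0:ℝ)..1, (⟪gradient f x, v⟫ + L * s * ‖v‖ ^ 2))
      = ⟪gradient f x, v⟫ + L / 2 * ‖v‖ ^ 2 := by
    rw [intervalIntegral.integral_add (intervalIntegrable_const)
      ((Continuous.intervalIntegrable (by fun_prop) 0 1 :
        IntervalIntegrable (fun s : ℝ => L * s * ‖v‖ ^ 2) MeasureTheory.volume 0 1))]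
    simp only [intervalIntegral.integral_const, smul_eq_mul]
    have : (∫ s in (0:ℝ)..1, L * s * ‖v‖ ^ 2) = L / 2 * ‖v‖ ^ 2 := by
      have : (fun s : ℝ => L * s * ‖v‖ ^ 2) = fun s : ℝ => (L * ‖v‖ ^ 2) * s := by
        funext s; ring
      rw [this, intervalIntegral.integral_const_mul, integral_id]
      ring
    rw [this]; ring
  have hxy : x + (1:ℝ) • v = y := by rw [hv]; simp
  have hx0 : x + (0:ℝ) • v = x := by simp
  rw [hxy, hx0] at hint
  linarith [hint2.trans_eq hval, hint]

/-- Descent inequality for GD expressed through the angle `α_t` between the per-class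
gradients and the norm ratio `C_t = ‖∇f1(x_t)‖ / ‖∇f0(x_t)‖`. -/
theorem stmt1 {m : ℕ} (f0 f1 : EuclideanSpace ℝ (Fin m) → ℝ) (L2 : ℝ) (hL2 : 0 ≤ L2)
    (hd0 : Differentiable ℝ f0) (hd1 : Differentiable ℝ f1)
    (hlip : LipschitzWith ⟨L2, hL2⟩ (gradient f0))
    (x : ℕ → EuclideanSpace ℝ (Fin m)) (η : ℕ → ℝ) (t : ℕ)
    (hg0 : gradient f0 (x t) ≠ 0) (hg1 : gradient f1 (x t) ≠ 0)
    (C cosα : ℝ)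
    (hC : C = ‖gradient f1 (x t)‖ / ‖gradient f0 (x t)‖)
    (hcos : cosα = ⟪gradient f0 (x t), gradient f1 (x t)⟫ /
      (‖gradient f0 (x t)‖ * ‖gradient f1 (x t)‖))
    (hstep : x (t + 1) = x t - η t • (gradient f0 (x t) + gradient f1 (x t))) :
    f0 (x (t + 1)) ≤ f0 (x t)
      - η t * (1 + cosα * C - (1 + C ^ 2) * L2 * η t) * ‖gradient f0 (x t)‖ ^ 2 := by
  set g0 := gradient f0 (x t) with hg0def
  set g1 := gradient f1 (x t) with hg1def
  have hn0 : ‖g0‖ ≠ 0 := norm_ne_zero_iff.mpr hg0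
  have hn1 : ‖g1‖ ≠ 0 := norm_ne_zero_iff.mpr hg1
  have hdes := descent_aux f0 hL2 hd0 hlip (x t) (x (t + 1))
  rw [hstep] at hdes ⊢
  have hdiff : x t - η t • (g0 + g1) - x t = -(η t • (g0 + g1)) := by abel
  rw [hdiff] at hdes
  have hinner : ⟪g0, -(η t • (g0 + g1))⟫ = -(η t * (‖g0‖ ^ 2 + ⟪g0, g1⟫)) := by
    rw [inner_neg_right, inner_smul_right, inner_add_right, real_inner_self_eq_norm_sq]
  have hnormsq : ‖-(η t • (g0 + g1))‖ ^ 2 = η t ^ 2 * ‖g0 + g1‖ ^ 2 := by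
    rw [norm_neg, norm_smul, mul_pow, Real.norm_eq_abs, sq_abs]
  have hcosC : cosα * C * ‖g0‖ ^ 2 = ⟪g0, g1⟫ := by
    rw [hcos, hC]
    field_simp
  have hC2 : (1 + C ^ 2) * ‖g0‖ ^ 2 = ‖g0‖ ^ 2 + ‖g1‖ ^ 2 := by
    rw [hC]
    field_simp
  have hsum : ‖g0 + g1‖ ^ 2 ≤ 2 * (‖g0‖ ^ 2 + ‖g1‖ ^ 2) := by
    have h1 : ‖g0 + g1‖ ^ 2 = ‖g0‖ ^ 2 + 2 * ⟪g0, g1⟫ + ‖g1‖ ^ 2 := by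
      rw [@norm_add_sq_real]
    have h2 : 2 * ⟪g0, g1⟫ ≤ ‖g0‖ ^ 2 + ‖g1‖ ^ 2 := by
      have := real_inner_le_norm g0 g1
      nlinarith [sq_nonneg (‖g0‖ - ‖g1‖)]
    linarith
  have hL2step : L2 / 2 * (η t ^ 2 * ‖g0 + g1‖ ^ 2)
      ≤ L2 * η t ^ 2 * (‖g0‖ ^ 2 + ‖g1‖ ^ 2) := by
    nlinarith [sq_nonneg (η t), mul_nonneg hL2 (sq_nonneg (η t))]
  rw [hinner, hnormsq] at hdes
  have goal_eq : f0 (x t) - η t * (1 + cosα * C - (1 + C ^ 2) * L2 * η t) * ‖g0‖ ^ 2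
      = f0 (x t) - η t * (‖g0‖ ^ 2 + ⟪g0, g1⟫) + L2 * η t ^ 2 * (‖g0‖ ^ 2 + ‖g1‖ ^ 2) := by
    have e1 : η t * (1 + cosα * C - (1 + C ^ 2) * L2 * η t) * ‖g0‖ ^ 2
        = η t * (‖g0‖ ^ 2 + cosα * C * ‖g0‖ ^ 2)
          - L2 * η t ^ 2 * ((1 + C ^ 2) * ‖g0‖ ^ 2) := by ring
    rw [e1, hcosC, hC2]
    ring
  rw [goal_eq]
  linarith
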